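/- For the unitaries U, V on L²(𝕋²) with UV = e^{2πiα}VU as above, set W = e^{−iπα} U V and let L = Φ(g) for g = [[1,0],[1,1]] ∈ SL(2,ℤ). Then L U L^{-1} = W and L V L^{-1} = V. Consequently, for any κ, λ ∈ ℝ, the operators exp[−2iκ Re(V)] exp[−2iκλ Re(U)] and exp[−2iκ Re(V)] exp[−2iκλ Re(W)] are unitarily equivalent and hence have equal spectra. -/

import Mathlib

open Complex

theorem stmt_18 {H : Type*} [NormedAddCommGroup H] [InnerProductSpace ℂ H] [CompleteSpace H]
    (ξ : HilbertBasis (ℤ × ℤ) ℂ H) (α κ l : ℝ)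
    (U V L : unitary (H →L[ℂ] H))
    (hU : ∀ m n : ℤ, (U : H →L[ℂ] H) (ξ (m, n)) = Complex.exp (π * α * I * n) • ξ (m + 1, n))
    (hV : ∀ m n : ℤ, (V : H →L[ℂ] H) (ξ (m, n)) = Complex.exp (-(π * α * I * m)) • ξ (m, n + 1))
    (hL : ∀ m n : ℤ, (L : H →L[ℂ] H) (ξ (m, n)) = ξ (m, m + n))
    (W : H →L[ℂ] H)
    (hW : W = Complex.exp (-(π * α * I)) • ((U * V : unitary (H →L[ℂ] H)) : H →L[ℂ] H))
    (A B : H →L[ℂ] H)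
    (hA : A = NormedSpace.exp ((-(2 * κ) * I : ℂ) •
        ((2 : ℂ)⁻¹ • ((V : H →L[ℂ] H) + star (V : H →L[ℂ] H)))) *
      NormedSpace.exp ((-(2 * κ * l) * I : ℂ) •
        ((2 : ℂ)⁻¹ • ((U : H →L[ℂ] H) + star (U : H →L[ℂ] H)))))
    (hB : B = NormedSpace.exp ((-(2 * κ) * I : ℂ) •
        ((2 : ℂ)⁻¹ • ((V : H →L[ℂ] H) + star (V : H →L[ℂ] H)))) *
      NormedSpace.exp ((-(2 * κ * l) * I : ℂ) • ((2 : ℂ)⁻¹ • (W + star W)))) :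
    ((L * U * L⁻¹ : unitary (H →L[ℂ] H)) : H →L[ℂ] H) = W ∧
    ((L * V * L⁻¹ : unitary (H →L[ℂ] H)) : H →L[ℂ] H) = (V : H →L[ℂ] H) ∧
    (∃ O ∈ unitary (H →L[ℂ] H), B = O * A * star O) ∧
    spectrum ℂ A = spectrum ℂ B := by
  have hdense : Dense (Submodule.span ℂ (Set.range ξ) : Set H) :=
    Submodule.dense_iff_topologicalClosure_eq_top.mpr ξ.dense_span
  set Lc : H →L[ℂ] H := (L : H →L[ℂ] H) with hLc
  set Uc : H →L[ℂ] H := (U : H →L[ℂ] H) with hUc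
  set Vc : H →L[ℂ] H := (V : H →L[ℂ] H) with hVc
  -- inverse of L acts as expected
  have hcoeinv : ((L⁻¹ : unitary (H →L[ℂ] H)) : H →L[ℂ] H) = star Lc := by
    rw [← Unitary.star_eq_inv]; rfl
  have hLs : ∀ m n : ℤ, (star Lc) (ξ (m, n)) = ξ (m, n - m) := by
    intro m n
    have h1 : Lc (ξ (m, n - m)) = ξ (m, n) := by
      rw [hL m (n - m)]; congr 1; ring_nf
    rw [← h1, ← ContinuousLinearMap.mul_apply, Unitary.coe_star_mul_self,
      ContinuousLinearMap.one_apply]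
  -- first conjugation identity
  have h1 : Lc * Uc * star Lc = W := by
    refine ContinuousLinearMap.ext_on hdense ?_
    rintro _ ⟨⟨m, n⟩, rfl⟩
    have lhs : (Lc * Uc * star Lc) (ξ (m, n))
        = Complex.exp (π * α * I * ((n : ℂ) - m)) • ξ (m + 1, n + 1) := by
      simp only [ContinuousLinearMap.mul_apply, hLs, hU, map_smul, hL]
      congr 2
      · push_cast; ring
      · ring
    have rhs : W (ξ (m, n))
        = Complex.exp (π * α * I * ((n : ℂ) - m)) • ξ (m + 1, n + 1) := by
      rw [hW]
      simp only [ContinuousLinearMap.smul_apply, Submonoid.coe_mul,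
        ContinuousLinearMap.mul_apply, hV, map_smul, hU, smul_smul, ← hUc, ← hVc]
      congr 1
      rw [← Complex.exp_add, ← Complex.exp_add]
      congr 1
      push_cast; ring
    rw [lhs, rhs]
  -- second conjugation identity
  have h2 : Lc * Vc * star Lc = Vc := by
    refine ContinuousLinearMap.ext_on hdense ?_
    rintro _ ⟨⟨m, n⟩, rfl⟩
    have lhs : (Lc * Vc * star Lc) (ξ (m, n))
        = Complex.exp (-(π * α * I * m)) • ξ (m, n + 1) := by
      simp only [ContinuousLinearMap.mul_apply, hLs, hV, map_smul, hL]
      congr 2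
      ring
    rw [lhs, hV]
  have hstar1 : Lc * star Uc * star Lc = star W := by
    rw [← h1]
    simp only [star_mul, star_star, mul_assoc]
  have hstar2 : Lc * star Vc * star Lc = star Vc := by
    conv_rhs => rw [← h2]
    simp only [star_mul, star_star, mul_assoc]
  -- the conjugation of A by L gives B
  have hsL : star Lc * Lc = 1 := Unitary.coe_star_mul_self L
  set u : (H →L[ℂ] H)ˣ := Unitary.toUnits L with hu
  have hu1 : (u : H →L[ℂ] H) = Lc := rfl
  have hu2 : ((u⁻¹ : (H →L[ℂ] H)ˣ) : H →L[ℂ] H) = star Lc := rfl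
  set X : H →L[ℂ] H := (-(2 * κ) * I : ℂ) • ((2 : ℂ)⁻¹ • (Vc + star Vc)) with hX
  set Y : H →L[ℂ] H := (-(2 * κ * l) * I : ℂ) • ((2 : ℂ)⁻¹ • (Uc + star Uc)) with hY
  set Z : H →L[ℂ] H := (-(2 * κ * l) * I : ℂ) • ((2 : ℂ)⁻¹ • (W + star W)) with hZ
  have hconjX : Lc * X * star Lc = X := by
    rw [hX]
    simp only [mul_smul_comm, smul_mul_assoc, mul_add, add_mul]
    rw [show Lc * Vc * star Lc + Lc * star Vc * star Lc = Vc + star Vc by rw [h2, hstar2]]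
  have hconjY : Lc * Y * star Lc = Z := by
    rw [hY, hZ]
    simp only [mul_smul_comm, smul_mul_assoc, mul_add, add_mul]
    rw [show Lc * Uc * star Lc + Lc * star Uc * star Lc = W + star W by rw [h1, hstar1]]
  have key : ∀ a b : H →L[ℂ] H,
      (Lc * a * star Lc) * (Lc * b * star Lc) = Lc * (a * b) * star Lc := by
    intro a b
    simp only [mul_assoc]
    rw [show star Lc * (Lc * (b * star Lc)) = b * star Lc by rw [← mul_assoc, hsL, one_mul]]
  have e1 : Lc * NormedSpace.exp X * star Lc = NormedSpace.exp X := by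
    let +nondep : NormedAlgebra ℚ (H →L[ℂ] H) := .restrictScalars ℚ ℂ (H →L[ℂ] H)
    have hc := NormedSpace.exp_units_conj u X
    rw [hu1, hu2, hconjX] at hc
    exact hc.symm
  have e2 : Lc * NormedSpace.exp Y * star Lc = NormedSpace.exp Z := by
    let +nondep : NormedAlgebra ℚ (H →L[ℂ] H) := .restrictScalars ℚ ℂ (H →L[ℂ] H)
    have hc := NormedSpace.exp_units_conj u Y
    rw [hu1, hu2, hconjY] at hc
    exact hc.symm
  have hBA : B = Lc * A * star Lc := by
    rw [hA, hB, ← key, e1, e2]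
  refine ⟨?_, ?_, ?_, ?_⟩
  · rw [Submonoid.coe_mul, Submonoid.coe_mul, hcoeinv, ← hLc, ← hUc, h1]
  · rw [Submonoid.coe_mul, Submonoid.coe_mul, hcoeinv, ← hLc, ← hVc, h2]
  · exact ⟨Lc, L.2, hBA⟩
  · have hs := spectrum.units_conjugate (R := ℂ) (a := A) (u := u)
    rw [hu1, hu2] at hs
    rw [hBA, hs]
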